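/- Let G be an inductive groupoid (an ordered groupoid whose identities form a meet-semilattice). Then (G, ⊗) with the pseudoproduct is an inverse semigroup whose idempotents are exactly the identities of G, and the natural partial order of (G, ⊗) coincides with the order of G. -/
import Mathlib


/-- An algebraic groupoid: a type with an everywhere-defined multiplication which is
only required to behave well on composable pairs (`d x = r y`), together with
inversion and domain/range maps (valued in the identities of the groupoid). -/
class Groupoid' (G : Type*) where
  mul : G → G → G
  inv : G → G
  d : G → G
  r : G → G
  r_d : ∀ x : G, r (d x) = d x
  d_r : ∀ x : G, d (r x) = r x
  mul_assoc : ∀ x y z : G, d x = r y → d y = r z → mul (mul x y) z = mul x (mul y z)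
  d_mul : ∀ x y : G, d x = r y → d (mul x y) = d y
  r_mul : ∀ x y : G, d x = r y → r (mul x y) = r x
  mul_d : ∀ x : G, mul x (d x) = x
  r_mul_cancel : ∀ x : G, mul (r x) x = x
  mul_inv : ∀ x : G, mul x (inv x) = r x
  inv_mul : ∀ x : G, mul (inv x) x = d x
  d_inv : ∀ x : G, d (inv x) = r x
  r_inv : ∀ x : G, r (inv x) = d x

open Groupoid'
open scoped Classical

/-- An element is an identity of the groupoid if it is its own domain. -/
def IsId {G : Type*} [Groupoid' G] (e : G) : Prop := d e = e

/-- An ordered groupoid: axioms (OG1), (OG2) and (OG3) (restriction exists uniquely). -/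
class OrderedGroupoid (G : Type*) [Groupoid' G] [PartialOrder G] : Prop where
  og1 : ∀ x y : G, x ≤ y → inv x ≤ inv y
  og2 : ∀ x y u v : G, x ≤ y → u ≤ v → d x = r u → d y = r v → mul x u ≤ mul y v
  og3 : ∀ x e : G, IsId e → e ≤ d x → ∃! z : G, z ≤ x ∧ d z = e


/-- The restriction `(x | e)` of `x` to an identity `e ≤ d x`: the unique element
below `x` with domain `e` (junk value `x` if undefined). -/
noncomputable def res {G : Type*} [Groupoid' G] [PartialOrder G] [OrderedGroupoid G]
    (x e : G) : G :=
  if h : IsId e ∧ e ≤ d x then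
    Classical.choose (OrderedGroupoid.og3 x e h.1 h.2).exists
  else x

/-- The corestriction `(e | x)` of `x` to an identity `e ≤ r x`. -/
noncomputable def cores {G : Type*} [Groupoid' G] [PartialOrder G] [OrderedGroupoid G]
    (e x : G) : G :=
  inv (res (inv x) e)


/-- `e` is the meet of the identities `a` and `b` in the poset of identities. -/
def IsMeetId {G : Type*} [Groupoid' G] [PartialOrder G] (e a b : G) : Prop :=
  IsId e ∧ e ≤ a ∧ e ≤ b ∧ ∀ f : G, IsId f → f ≤ a → f ≤ b → f ≤ e

/-- The pseudoproduct `x ⊗ y` is defined when `d x ∧ r y` exists. -/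
def PsDefined {G : Type*} [Groupoid' G] [PartialOrder G] (x y : G) : Prop :=
  ∃ e : G, IsMeetId e (d x) (r y)

/-- The pseudoproduct `x ⊗ y = (x | e)(e | y)` where `e = d x ∧ r y`
(junk value `x` when undefined). -/
noncomputable def pseudo {G : Type*} [Groupoid' G] [PartialOrder G] [OrderedGroupoid G]
    (x y : G) : G :=
  if h : PsDefined x y then
    mul (res x (Classical.choose h)) (cores (Classical.choose h) y)
  else x

section Aux

variable {G : Type*} [Groupoid' G] [PartialOrder G] [OrderedGroupoid G]

lemma isId_r' (x : G) : IsId (r x) := d_r x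

lemma isId_d' (x : G) : IsId (d x) := by
  show d (d x) = d x
  conv_lhs => rw [← r_d x]
  rw [d_r, r_d]

lemma r_of_isId {e : G} (he : IsId e) : r e = e := by
  calc r e = r (d e) := by rw [he]
    _ = d e := r_d e
    _ = e := he

lemma mul_cancel_left' (x a b : G) (ha : d x = r a) (hb : d x = r b)
    (h : mul x a = mul x b) : a = b := by
  have key : ∀ c : G, d x = r c → mul (inv x) (mul x c) = c := by
    intro c hc
    rw [← Groupoid'.mul_assoc (inv x) x c (d_inv x) hc, inv_mul, hc, r_mul_cancel]
  rw [← key a ha, ← key b hb, h]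

lemma inv_inv' (x : G) : inv (inv x) = x := by
  apply mul_cancel_left' (inv x)
  · exact (r_inv (inv x)).symm
  · exact d_inv x
  · rw [Groupoid'.mul_inv, r_inv, inv_mul]

lemma r_mono' {x y : G} (h : x ≤ y) : r x ≤ r y := by
  have := OrderedGroupoid.og2 x y (inv x) (inv y) h (OrderedGroupoid.og1 _ _ h)
    (r_inv x).symm (r_inv y).symm
  rwa [Groupoid'.mul_inv, Groupoid'.mul_inv] at this

lemma d_mono' {x y : G} (h : x ≤ y) : d x ≤ d y := by
  have := OrderedGroupoid.og2 (inv x) (inv y) x y (OrderedGroupoid.og1 _ _ h) h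
    (d_inv x) (d_inv y)
  rwa [inv_mul, inv_mul] at this

lemma res_spec {x e : G} (he : IsId e) (hle : e ≤ d x) :
    res x e ≤ x ∧ d (res x e) = e := by
  have h : IsId e ∧ e ≤ d x := ⟨he, hle⟩
  rw [res, dif_pos h]
  exact Classical.choose_spec (OrderedGroupoid.og3 x e h.1 h.2).exists

lemma res_le {x e : G} (he : IsId e) (hle : e ≤ d x) : res x e ≤ x := (res_spec he hle).1

lemma d_res {x e : G} (he : IsId e) (hle : e ≤ d x) : d (res x e) = e := (res_spec he hle).2

lemma res_unique {x e : G} (he : IsId e) (hle : e ≤ d x) {z : G} (hz : z ≤ x)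
    (hd : d z = e) : z = res x e := by
  have h : IsId e ∧ e ≤ d x := ⟨he, hle⟩
  rw [res, dif_pos h]
  exact (OrderedGroupoid.og3 x e h.1 h.2).unique ⟨hz, hd⟩
    (Classical.choose_spec (OrderedGroupoid.og3 x e h.1 h.2).exists)

lemma res_d (x : G) : res x (d x) = x := (res_unique (isId_d' x) le_rfl le_rfl rfl).symm

lemma cores_le {x e : G} (he : IsId e) (hle : e ≤ r x) : cores e x ≤ x := by
  have h : e ≤ d (inv x) := by rw [d_inv]; exact hle
  have := OrderedGroupoid.og1 _ _ (res_le he h)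
  show inv (res (inv x) e) ≤ x
  rwa [inv_inv'] at this

lemma r_cores {x e : G} (he : IsId e) (hle : e ≤ r x) : r (cores e x) = e := by
  show r (inv (res (inv x) e)) = e
  rw [r_inv, d_res he (by rw [d_inv]; exact hle)]

lemma cores_unique {x e : G} (he : IsId e) (hle : e ≤ r x) {z : G} (hz : z ≤ x)
    (hr : r z = e) : z = cores e x := by
  have h : inv z = res (inv x) e :=
    res_unique he (by rw [d_inv]; exact hle) (OrderedGroupoid.og1 _ _ hz)
      (by rw [d_inv, hr])
  show z = inv (res (inv x) e)
  rw [← h, inv_inv']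

lemma cores_r (x : G) : cores (r x) x = x := (cores_unique (isId_r' x) le_rfl le_rfl rfl).symm

lemma res_res {x e f : G} (he : IsId e) (hle : e ≤ d x) (hf : IsId f) (hfe : f ≤ e) :
    res (res x e) f = res x f := by
  have h2 : f ≤ d (res x e) := by rw [d_res he hle]; exact hfe
  exact (res_unique hf (hfe.trans hle) ((res_le hf h2).trans (res_le he hle))
    (d_res hf h2))

lemma cores_cores {x e f : G} (he : IsId e) (hle : e ≤ r x) (hf : IsId f) (hfe : f ≤ e) :
    cores f (cores e x) = cores f x := by
  have h2 : f ≤ r (cores e x) := by rw [r_cores he hle]; exact hfe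
  exact (cores_unique hf (hfe.trans hle) ((cores_le hf h2).trans (cores_le he hle))
    (r_cores hf h2))

lemma res_mul {x y e : G} (hxy : d x = r y) (he : IsId e) (hle : e ≤ d y) :
    res (mul x y) e = mul (res x (r (res y e))) (res y e) := by
  have hg : r (res y e) ≤ d x := by rw [hxy]; exact r_mono' (res_le he hle)
  have hcomp : d (res x (r (res y e))) = r (res y e) := d_res (isId_r' _) hg
  refine (res_unique he (by rw [d_mul x y hxy]; exact hle) ?_ ?_).symm
  · exact OrderedGroupoid.og2 _ _ _ _ (res_le (isId_r' _) hg) (res_le he hle) hcomp hxy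
  · rw [d_mul _ _ hcomp, d_res he hle]

lemma cores_mul {x y e : G} (hxy : d x = r y) (he : IsId e) (hle : e ≤ r x) :
    cores e (mul x y) = mul (cores e x) (cores (d (cores e x)) y) := by
  have hh : d (cores e x) ≤ r y := by rw [← hxy]; exact d_mono' (cores_le he hle)
  have hcomp : d (cores e x) = r (cores (d (cores e x)) y) := (r_cores (isId_d' _) hh).symm
  refine (cores_unique he (by rw [r_mul x y hxy]; exact hle) ?_ ?_).symm
  · exact OrderedGroupoid.og2 _ _ _ _ (cores_le he hle) (cores_le (isId_d' _) hh) hcomp hxy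
  · rw [r_mul _ _ hcomp, r_cores he hle]

lemma meet_unique {e e' a b : G} (h : IsMeetId e a b) (h' : IsMeetId e' a b) : e = e' :=
  le_antisymm (h'.2.2.2 e h.1 h.2.1 h.2.2.1) (h.2.2.2 e' h'.1 h'.2.1 h'.2.2.1)

lemma pseudo_eq {x y e : G} (h : IsMeetId e (d x) (r y)) :
    pseudo x y = mul (res x e) (cores e y) := by
  have hd : PsDefined x y := ⟨e, h⟩
  rw [pseudo, dif_pos hd, meet_unique (Classical.choose_spec hd) h]

end Aux

section Aux2

variable {G : Type*} [Groupoid' G] [PartialOrder G] [OrderedGroupoid G]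
variable (hInd : ∀ e f : G, IsId e → IsId f → ∃ m : G, IsMeetId m e f)
include hInd

lemma pseudo_le {x y x' y' : G} (hx : x' ≤ x) (hy : y' ≤ y) (hc : d x' = r y') :
    mul x' y' ≤ pseudo x y := by
  obtain ⟨e, he⟩ := hInd (d x) (r y) (isId_d' x) (isId_r' y)
  rw [pseudo_eq he]
  have hk : d x' ≤ e :=
    he.2.2.2 (d x') (isId_d' x') (d_mono' hx) (by rw [hc]; exact r_mono' hy)
  have hk' : r y' ≤ e := by rw [← hc]; exact hk
  have hx'' : x' ≤ res x e := by
    have h1 : x' = res x (d x') := res_unique (isId_d' x') (d_mono' hx) hx rfl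
    rw [h1, ← res_res he.1 he.2.1 (isId_d' x') hk]
    exact res_le (isId_d' x') (by rw [d_res he.1 he.2.1]; exact hk)
  have hy'' : y' ≤ cores e y := by
    have h1 : y' = cores (r y') y := cores_unique (isId_r' y') (r_mono' hy) hy rfl
    rw [h1, ← cores_cores he.1 he.2.2.1 (isId_r' y') hk']
    exact cores_le (isId_r' y') (by rw [r_cores he.1 he.2.2.1]; exact hk')
  exact OrderedGroupoid.og2 _ _ _ _ hx'' hy'' hc
    (by rw [d_res he.1 he.2.1, r_cores he.1 he.2.2.1])

lemma pseudo_assoc (x y z : G) :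
    pseudo (pseudo x y) z = pseudo x (pseudo y z) := by
  apply le_antisymm
  · obtain ⟨e, he⟩ := hInd (d x) (r y) (isId_d' x) (isId_r' y)
    have hab : d (res x e) = r (cores e y) := by
      rw [d_res he.1 he.2.1, r_cores he.1 he.2.2.1]
    have hu : pseudo x y = mul (res x e) (cores e y) := pseudo_eq he
    obtain ⟨f, hf⟩ := hInd (d (pseudo x y)) (r z) (isId_d' _) (isId_r' z)
    have hdu : d (pseudo x y) = d (cores e y) := by
      rw [hu, d_mul _ _ hab]
    have hfb : f ≤ d (cores e y) := by rw [← hdu]; exact hf.2.1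
    have hres : res (pseudo x y) f
        = mul (res (res x e) (r (res (cores e y) f))) (res (cores e y) f) := by
      rw [hu]; exact res_mul hab hf.1 hfb
    set x₀ := res (res x e) (r (res (cores e y) f)) with hx₀def
    set y₀ := res (cores e y) f with hy₀def
    set z₀ := cores f z with hz₀def
    have hgle : r y₀ ≤ d (res x e) := by
      rw [hab]; exact r_mono' (res_le hf.1 hfb)
    have hx₀ : x₀ ≤ x := (res_le (isId_r' _) hgle).trans (res_le he.1 he.2.1)
    have hy₀ : y₀ ≤ y := (res_le hf.1 hfb).trans (cores_le he.1 he.2.2.1)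
    have hz₀ : z₀ ≤ z := cores_le hf.1 hf.2.2.1
    have h1 : d x₀ = r y₀ := d_res (isId_r' _) hgle
    have h2 : d y₀ = r z₀ := by rw [d_res hf.1 hfb, r_cores hf.1 hf.2.2.1]
    have key : pseudo (pseudo x y) z = mul (mul x₀ y₀) z₀ := by
      rw [pseudo_eq hf, hres]
    rw [key, Groupoid'.mul_assoc x₀ y₀ z₀ h1 h2]
    refine pseudo_le hInd hx₀ (pseudo_le hInd hy₀ hz₀ h2) ?_
    rw [r_mul y₀ z₀ h2]; exact h1
  · obtain ⟨m, hm⟩ := hInd (d y) (r z) (isId_d' y) (isId_r' z)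
    have hbc : d (res y m) = r (cores m z) := by
      rw [d_res hm.1 hm.2.1, r_cores hm.1 hm.2.2.1]
    have hv : pseudo y z = mul (res y m) (cores m z) := pseudo_eq hm
    obtain ⟨e', he'⟩ := hInd (d x) (r (pseudo y z)) (isId_d' x) (isId_r' _)
    have hrv : r (pseudo y z) = r (res y m) := by rw [hv, r_mul _ _ hbc]
    have he'b : e' ≤ r (res y m) := by rw [← hrv]; exact he'.2.2.1
    have hcor : cores e' (pseudo y z)
        = mul (cores e' (res y m)) (cores (d (cores e' (res y m))) (cores m z)) := by
      rw [hv]; exact cores_mul hbc he'.1 he'b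
    set x₁ := res x e' with hx₁def
    set y₁ := cores e' (res y m) with hy₁def
    set z₁ := cores (d y₁) (cores m z) with hz₁def
    have hhle : d y₁ ≤ r (cores m z) := by
      rw [← hbc]; exact d_mono' (cores_le he'.1 he'b)
    have hx₁ : x₁ ≤ x := res_le he'.1 he'.2.1
    have hy₁ : y₁ ≤ y := (cores_le he'.1 he'b).trans (res_le hm.1 hm.2.1)
    have hz₁ : z₁ ≤ z := (cores_le (isId_d' _) hhle).trans (cores_le hm.1 hm.2.2.1)
    have h1 : d x₁ = r y₁ := by rw [d_res he'.1 he'.2.1, r_cores he'.1 he'b]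
    have h2 : d y₁ = r z₁ := (r_cores (isId_d' _) hhle).symm
    have key : pseudo x (pseudo y z) = mul (mul x₁ y₁) z₁ := by
      rw [pseudo_eq he', hcor, Groupoid'.mul_assoc x₁ y₁ z₁ h1 h2]
    rw [key]
    refine pseudo_le hInd (pseudo_le hInd hx₁ hy₁ h1) hz₁ ?_
    rw [d_mul x₁ y₁ h1]; exact h2

lemma pseudo_inv_right (x : G) : pseudo x (inv x) = r x := by
  have hm : IsMeetId (d x) (d x) (r (inv x)) := by
    rw [r_inv]; exact ⟨isId_d' x, le_rfl, le_rfl, fun f _ h _ => h⟩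
  rw [pseudo_eq hm, res_d]
  have hc : cores (d x) (inv x) = inv x :=
    (cores_unique (isId_d' x) (r_inv x).ge le_rfl (r_inv x)).symm
  rw [hc, Groupoid'.mul_inv]

lemma pseudo_r_left (x : G) : pseudo (r x) x = x := by
  have hm : IsMeetId (r x) (d (r x)) (r x) := by
    rw [d_r]; exact ⟨isId_r' x, le_rfl, le_rfl, fun f _ h _ => h⟩
  rw [pseudo_eq hm]
  have h1 : res (r x) (r x) = r x := by
    have := res_d (r x); rwa [d_r] at this
  rw [h1, cores_r, r_mul_cancel]

lemma pseudo_idem_of_isId {x : G} (he : IsId x) : pseudo x x = x := by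
  have hrx : r x = x := r_of_isId he
  have hm : IsMeetId x (d x) (r x) := by
    rw [he, hrx]; exact ⟨he, le_rfl, le_rfl, fun f _ h _ => h⟩
  rw [pseudo_eq hm]
  have h1 : res x x = x := by have := res_d x; rwa [he] at this
  have h2 : cores x x = x := by have := cores_r x; rwa [hrx] at this
  rw [h1, h2]
  calc mul x x = mul x (d x) := by rw [he]
    _ = x := mul_d x

lemma isId_of_pseudo_idem {x : G} (h : pseudo x x = x) : IsId x := by
  obtain ⟨e, hm⟩ := hInd (d x) (r x) (isId_d' x) (isId_r' x)
  have hx : x = mul (res x e) (cores e x) := h.symm.trans (pseudo_eq hm)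
  have hcomp : d (res x e) = r (cores e x) := by
    rw [d_res hm.1 hm.2.1, r_cores hm.1 hm.2.2.1]
  have hd : d x = d (cores e x) := by
    conv_lhs => rw [hx]
    rw [d_mul _ _ hcomp]
  have hr : r x = r (res x e) := by
    conv_lhs => rw [hx]
    rw [r_mul _ _ hcomp]
  have hb : cores e x = x := by
    rw [res_unique (isId_d' x) le_rfl (cores_le hm.1 hm.2.2.1) hd.symm, res_d]
  have ha : res x e = x := by
    rw [cores_unique (isId_r' x) le_rfl (res_le hm.1 hm.2.1) hr.symm, cores_r]
  have he_rx : e = r x := by rw [← hb]; exact (r_cores hm.1 hm.2.2.1).symm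
  have he_dx : e = d x := by rw [← ha]; exact (d_res hm.1 hm.2.1).symm
  have hxx : x = mul x x := by
    calc x = mul (res x e) (cores e x) := hx
      _ = mul x x := by rw [ha, hb]
  have : x = d x := by
    refine mul_cancel_left' x x (d x) ?_ (r_d x).symm ?_
    · rw [← he_dx, he_rx]
    · rw [mul_d]; exact hxx.symm
  exact this.symm

lemma pseudo_ids {e f m : G} (he : IsId e) (hf : IsId f) (hm : IsMeetId m e f) :
    pseudo e f = m := by
  have hm' : IsMeetId m (d e) (r f) := by rw [he, r_of_isId hf]; exact hm
  rw [pseudo_eq hm']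
  have h1 : res e m = m :=
    (res_unique hm.1 (by rw [he]; exact hm.2.1) hm.2.1 hm.1).symm
  have h2 : cores m f = m :=
    (cores_unique hm.1 (by rw [r_of_isId hf]; exact hm.2.2.1) hm.2.2.1
      (r_of_isId hm.1)).symm
  rw [h1, h2]
  nth_rewrite 2 [← hm.1]
  exact mul_d m

end Aux2

theorem stmt16 {G : Type*} [Groupoid' G] [PartialOrder G] [OrderedGroupoid G]
    (hInd : ∀ e f : G, IsId e → IsId f → ∃ m : G, IsMeetId m e f) :
    (∀ x y z : G, pseudo (pseudo x y) z = pseudo x (pseudo y z)) ∧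
    (∀ x : G, pseudo (pseudo x (inv x)) x = x) ∧
    (∀ x : G, pseudo (pseudo (inv x) x) (inv x) = inv x) ∧
    (∀ e f : G, pseudo e e = e → pseudo f f = f → pseudo e f = pseudo f e) ∧
    (∀ x : G, pseudo x x = x ↔ IsId x) ∧
    (∀ x y : G, x ≤ y ↔ ∃ e : G, pseudo e e = e ∧ x = pseudo y e) := by
  refine ⟨pseudo_assoc hInd, ?_, ?_, ?_, ?_, ?_⟩
  · intro x
    rw [pseudo_inv_right hInd, pseudo_r_left hInd]
  · intro x
    have hdd : d (d x) = d x := isId_d' x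
    have h1 : pseudo (inv x) x = d x := by
      have hm : IsMeetId (r x) (d (inv x)) (r x) := by
        rw [d_inv]; exact ⟨isId_r' x, le_rfl, le_rfl, fun f _ h _ => h⟩
      rw [pseudo_eq hm]
      have ha : res (inv x) (r x) = inv x := by
        have := res_d (inv x); rwa [d_inv] at this
      rw [ha, cores_r, inv_mul]
    rw [h1]
    have hm : IsMeetId (d x) (d (d x)) (r (inv x)) := by
      rw [r_inv, hdd]; exact ⟨isId_d' x, le_rfl, le_rfl, fun f _ h _ => h⟩
    rw [pseudo_eq hm]
    have ha : res (d x) (d x) = d x := by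
      have := res_d (d x); rwa [hdd] at this
    have hb : cores (d x) (inv x) = inv x :=
      (cores_unique (isId_d' x) (r_inv x).ge le_rfl (r_inv x)).symm
    rw [ha, hb, ← r_inv x, r_mul_cancel]
  · intro e f hpe hpf
    have he := isId_of_pseudo_idem hInd hpe
    have hf := isId_of_pseudo_idem hInd hpf
    obtain ⟨m, hm⟩ := hInd e f he hf
    have hm' : IsMeetId m f e :=
      ⟨hm.1, hm.2.2.1, hm.2.1, fun g hg h1 h2 => hm.2.2.2 g hg h2 h1⟩
    rw [pseudo_ids hInd he hf hm, pseudo_ids hInd hf he hm']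
  · intro x
    exact ⟨isId_of_pseudo_idem hInd, pseudo_idem_of_isId hInd⟩
  · intro x y
    constructor
    · intro hxy
      refine ⟨d x, pseudo_idem_of_isId hInd (isId_d' x), ?_⟩
      have hm : IsMeetId (d x) (d y) (r (d x)) := by
        rw [r_d]; exact ⟨isId_d' x, d_mono' hxy, le_rfl, fun f _ _ h => h⟩
      rw [pseudo_eq hm]
      have hcor : cores (d x) (d x) = d x :=
        (cores_unique (isId_d' x) (r_d x).ge le_rfl (r_d x)).symm
      have hres : res y (d x) = x := (res_unique (isId_d' x) (d_mono' hxy) hxy rfl).symm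
      rw [hcor, hres, mul_d]
    · rintro ⟨e, h1, h2⟩
      have he := isId_of_pseudo_idem hInd h1
      obtain ⟨m, hm⟩ := hInd (d y) (r e) (isId_d' y) (isId_r' e)
      have hmle : m ≤ e := by rw [← r_of_isId he]; exact hm.2.2.1
      have hcor : cores m e = m :=
        (cores_unique hm.1 hm.2.2.1 hmle (r_of_isId hm.1)).symm
      rw [pseudo_eq hm, hcor] at h2
      have hkey : mul (res y m) m = res y m := by
        have hd := d_res hm.1 hm.2.1
        calc mul (res y m) m = mul (res y m) (d (res y m)) := by rw [hd]
          _ = res y m := mul_d _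
      rw [hkey] at h2
      rw [h2]
      exact res_le hm.1 hm.2.1
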